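/- Suppose that on the whole interval (t₁, t₂) one has 0 ≤ a(t) − |b(t)| ≤ η (i.e., (t₁,t₂) = S_+(t₁,t₂)). Then a solution x of the delay inequality satisfies |x(t₂)| ≤ M₀(t₁) − [M₀(t₁) − |x(t₁)|] e^{−M_a (t₂ − t₁)}, where M₀(t) = sup_{t−τ_max ≤ s ≤ t} |x(s)|. -/

import Mathlib

/-- Upper right Dini derivative `D⁺f(t) = limsup_{h → 0⁺} (f(t+h) - f(t))/h`. -/
noncomputable def DiniUpper (f : ℝ → ℝ) (t : ℝ) : EReal :=
  Filter.limsup (fun h : ℝ => (((f (t + h) - f t) / h : ℝ) : EReal))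
    (nhdsWithin 0 (Set.Ioi 0))

/-- The maximal function `M₀(t) = sup_{t-τ_max ≤ s ≤ t} |x(s)|`. -/
noncomputable def M0 (x : ℝ → ℝ) (τmax t : ℝ) : ℝ :=
  sSup ((fun s => |x s|) '' Set.Icc (t - τmax) t)

open Filter Set

set_option maxHeartbeats 1600000 in
/-- **Lemma 3, case 1.** Suppose `0 ≤ a(t) - |b(t)| ≤ η` on the whole interval `(t₁,t₂)`
(i.e. `(t₁,t₂) = S_+(t₁,t₂)`). Then a solution of
`D⁺|x(t)| ≤ -a(t)|x(t)| + b(t) sup_{t-τ_max ≤ s ≤ t} |x(s)|` satisfies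
`|x(t₂)| ≤ M₀(t₁) - [M₀(t₁) - |x(t₁)|] e^{-M_a (t₂ - t₁)}`. -/
theorem estimate_on_Splus (Ma Mb τmax η t₁ t₂ : ℝ) (a b : ℝ → ℝ)
    (hτmax : 0 < τmax) (hη : 0 < η)
    (ha : ∀ t ≥ (0 : ℝ), 0 < a t ∧ a t ≤ Ma)
    (hb : ∀ t ≥ (0 : ℝ), |b t| ≤ Mb)
    (x φ : ℝ → ℝ) (hxcont : Continuous x)
    (hinit : ∀ s ∈ Set.Icc (-τmax) (0 : ℝ), x s = φ s)
    (hineq : ∀ t ≥ (0 : ℝ), DiniUpper (fun s => |x s|) t ≤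
      ((-(a t) * |x t| + b t * sSup ((fun s => |x s|) '' Set.Icc (t - τmax) t) : ℝ) : EReal))
    (ht₁ : 0 ≤ t₁) (ht₁₂ : t₁ < t₂)
    (hSplus : ∀ t ∈ Set.Ioo t₁ t₂, 0 ≤ a t - |b t| ∧ a t - |b t| ≤ η) :
    |x t₂| ≤ M0 x τmax t₁ - (M0 x τmax t₁ - |x t₁|) * Real.exp (-Ma * (t₂ - t₁)) := by
  obtain ⟨ha1, hMaa⟩ := ha t₁ ht₁
  have hMapos : 0 < Ma := lt_of_lt_of_le ha1 hMaa
  set y : ℝ → ℝ := fun s => |x s| with hy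
  have hycont : Continuous y := hxcont.abs
  have hynn : ∀ s, 0 ≤ y s := fun s => abs_nonneg _
  have hyK : ∀ u v : ℝ, BddAbove (y '' Icc u v) := fun u v =>
    (isCompact_Icc.image hycont).bddAbove
  set M : ℝ := sSup (y '' Icc (t₁ - τmax) t₁) with hMdef
  have hM0 : M0 x τmax t₁ = M := rfl
  rw [hM0]
  show y t₂ ≤ M - (M - y t₁) * Real.exp (-Ma * (t₂ - t₁))
  have hMb' : ∀ s ∈ Icc (t₁ - τmax) t₁, y s ≤ M := fun s hs =>
    le_csSup (hyK _ _) (mem_image_of_mem _ hs)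
  have hMy1 : y t₁ ≤ M := hMb' t₁ ⟨by linarith, le_refl _⟩
  clear_value M
  have H : ∀ ε > (0:ℝ), y t₂ ≤ (M - (M - y t₁) * Real.exp (-Ma * (t₂ - t₁))) + ε := by
    intro ε hε
    set C : ℝ := M + ε / 2 - y t₁ with hC
    have hCpos : 0 < C := by rw [hC]; linarith
    set w : ℝ → ℝ := fun t => M + ε - C * Real.exp (-Ma * (t - t₁)) with hw
    have hwcont : Continuous w := by
      apply continuous_const.sub
      exact continuous_const.mul
        ((continuous_const.mul (continuous_id.sub continuous_const)).rexp)
    have hkey : ∀ t, M + ε - w t = C * Real.exp (-Ma * (t - t₁)) := fun t => by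
      simp only [hw]; ring
    have hkeypos : ∀ t, 0 < M + ε - w t := fun t => by
      rw [hkey t]; positivity
    have hwderiv : ∀ t, HasDerivAt w (Ma * (M + ε - w t)) t := by
      intro t
      have h1 : HasDerivAt (fun t : ℝ => -Ma * (t - t₁)) (-Ma) t := by
        simpa using ((hasDerivAt_id t).sub_const t₁).const_mul (-Ma)
      have h2 := h1.exp
      have h3 := (h2.const_mul C).const_sub (M + ε)
      have h4 : Ma * (M + ε - w t) = -(C * (Real.exp (-Ma * (t - t₁)) * -Ma)) := by
        rw [hkey t]; ring
      rw [h4]; exact h3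
    have hwt1 : w t₁ = y t₁ + ε / 2 := by
      simp only [hw, hC]; simp; ring
    have hwmono : ∀ s t : ℝ, s ≤ t → w s ≤ w t := by
      intro s t hst
      have hexp : Real.exp (-Ma * (t - t₁)) ≤ Real.exp (-Ma * (s - t₁)) := by
        apply Real.exp_le_exp.mpr; nlinarith
      simp only [hw]
      nlinarith [mul_le_mul_of_nonneg_left hexp hCpos.le]
    clear_value w C
    set A : Set ℝ := {t | t ∈ Icc t₁ t₂ ∧ ∀ s ∈ Icc t₁ t, y s ≤ w s} with hA
    have ht₁A : t₁ ∈ A := by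
      refine ⟨⟨le_refl _, le_of_lt ht₁₂⟩, fun s hs => ?_⟩
      have hst : s = t₁ := le_antisymm hs.2 hs.1
      rw [hst, hwt1]; linarith
    have hAbdd : BddAbove A := ⟨t₂, fun t ht => ht.1.2⟩
    have hAne : A.Nonempty := ⟨t₁, ht₁A⟩
    set T : ℝ := sSup A with hT
    have hT1 : t₁ ≤ T := le_csSup hAbdd ht₁A
    have hT2 : T ≤ t₂ := csSup_le hAne fun t ht => ht.1.2
    have hTA : ∀ s ∈ Icc t₁ T, y s ≤ w s := by
      have hIco : ∀ s ∈ Ico t₁ T, y s ≤ w s := by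
        intro s hs
        obtain ⟨t, htA, hst⟩ := exists_lt_of_lt_csSup hAne hs.2
        exact htA.2 s ⟨hs.1, le_of_lt hst⟩
      rcases eq_or_lt_of_le hT1 with h | h
      · intro s hs
        have hst : s = t₁ := le_antisymm (h ▸ hs.2) hs.1
        rw [hst, hwt1]; linarith
      · have hcl : Icc t₁ T ⊆ {s | y s ≤ w s} := by
          rw [← closure_Ico (ne_of_lt h)]
          exact (isClosed_le hycont hwcont).closure_subset_iff.mpr hIco
        exact fun s hs => hcl hs
    clear_value T
    have htend : Tendsto (fun h : ℝ => T + h) (nhdsWithin 0 (Ioi 0)) (nhds T) := by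
      have h1 : Tendsto (fun h : ℝ => T + h) (nhds 0) (nhds T) := by
        have hcont : Continuous fun h : ℝ => T + h := continuous_const.add continuous_id
        simpa using hcont.tendsto (0 : ℝ)
      exact h1.mono_left nhdsWithin_le_nhds
    have hTt2 : T = t₂ := by
      by_contra hne
      have hTlt : T < t₂ := lt_of_le_of_ne hT2 hne
      have hev : ∀ᶠ h in nhdsWithin (0:ℝ) (Ioi 0), y (T + h) < w (T + h) := by
        rcases lt_or_eq_of_le (hTA T ⟨hT1, le_refl T⟩) with hlt | heq
        · -- strict inequality at T: use continuity
          have hty : Tendsto (fun h : ℝ => y (T + h)) (nhdsWithin 0 (Ioi 0)) (nhds (y T)) :=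
            (hycont.tendsto T).comp htend
          have htw : Tendsto (fun h : ℝ => w (T + h)) (nhdsWithin 0 (Ioi 0)) (nhds (w T)) :=
            (hwcont.tendsto T).comp htend
          exact hty.eventually_lt htw hlt
        · -- equality at T: use the Dini derivative inequality
          have hT0 : (0:ℝ) ≤ T := le_trans ht₁ hT1
          have ht₁T : t₁ < T := by
            rcases eq_or_lt_of_le hT1 with h | h
            · exfalso; rw [← h, hwt1] at heq; linarith
            · exact h
          obtain ⟨hab, -⟩ := hSplus T ⟨ht₁T, hTlt⟩
          set K : ℝ := sSup (y '' Icc (T - τmax) T) with hK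
          have hKnn : 0 ≤ K :=
            le_trans (hynn T) (le_csSup (hyK _ _) (mem_image_of_mem _ ⟨by linarith, le_refl T⟩))
          have hKle : K ≤ max M (w T) := by
            apply csSup_le (Nonempty.image _ (nonempty_Icc.mpr (by linarith)))
            rintro v ⟨s, hs, rfl⟩
            rcases le_or_gt s t₁ with h | h
            · exact le_max_of_le_left (hMb' s ⟨by linarith [hs.1], h⟩)
            · exact le_max_of_le_right
                (le_trans (hTA s ⟨le_of_lt h, hs.2⟩) (hwmono s T hs.2))
          have hdini : DiniUpper y T ≤ ((-(a T) * y T + b T * K : ℝ) : EReal) := hineq T hT0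
          clear_value K
          set c : ℝ := -(a T) * y T + b T * K with hc
          set d : ℝ := Ma * (M + ε - w T) with hd
          obtain ⟨haT1, haT2⟩ := ha T hT0
          have hcd : c < d := by
            have hb2 : b T ≤ a T := le_trans (le_abs_self _) (by linarith)
            have h1 : b T * K ≤ a T * K := mul_le_mul_of_nonneg_right hb2 hKnn
            have hdpos : 0 < d := by rw [hd]; exact mul_pos hMapos (hkeypos T)
            rcases le_total M (w T) with hMw | hMw
            · have hK2 : K ≤ w T := le_trans hKle (max_le hMw (le_refl _))
              have h2 : a T * K ≤ a T * w T := mul_le_mul_of_nonneg_left hK2 haT1.le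
              have hc0 : c ≤ 0 := by rw [hc, heq]; linarith
              linarith
            · have hK2 : K ≤ M := le_trans hKle (max_le (le_refl _) hMw)
              have h2' : a T * K ≤ a T * M := mul_le_mul_of_nonneg_left hK2 haT1.le
              have h2 : c ≤ a T * M - a T * w T := by rw [hc, heq]; linarith
              have h3 : a T * M - a T * w T ≤ Ma * M - Ma * w T := by
                nlinarith [mul_le_mul_of_nonneg_right haT2 (by linarith : (0:ℝ) ≤ M - w T)]
              have h4 : Ma * M - Ma * w T < d := by
                rw [hd]; nlinarith [mul_pos hMapos hε]
              linarith
          clear_value c d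
          set c' : ℝ := (c + d) / 2 with hc'
          have hltc' : c < c' := by rw [hc']; linarith
          have hc'd : c' < d := by rw [hc']; linarith
          clear_value c'
          have hev1 : ∀ᶠ h in nhdsWithin (0:ℝ) (Ioi 0), (y (T + h) - y T) / h < c' := by
            have h1 : DiniUpper y T < (c' : EReal) :=
              lt_of_le_of_lt hdini (by exact_mod_cast hltc')
            rw [DiniUpper] at h1
            filter_upwards [eventually_lt_of_limsup_lt h1] with h hh
            exact_mod_cast hh
          have hev2 : ∀ᶠ h in nhdsWithin (0:ℝ) (Ioi 0), c' < (w (T + h) - w T) / h := by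
            have hmap : Tendsto (fun h : ℝ => T + h) (nhdsWithin 0 (Ioi 0))
                (nhdsWithin T {T}ᶜ) := by
              apply tendsto_nhdsWithin_of_tendsto_nhds_of_eventually_within _ htend
              filter_upwards [self_mem_nhdsWithin] with h hh
              have hh' : (0:ℝ) < h := hh
              simp only [mem_compl_iff, mem_singleton_iff]
              intro hcontra
              nlinarith [hcontra]
            have hslope := (hasDerivAt_iff_tendsto_slope.mp (hwderiv T)).comp hmap
            have hslope' : Tendsto (fun h : ℝ => (w (T + h) - w T) / h)
                (nhdsWithin 0 (Ioi 0)) (nhds (Ma * (M + ε - w T))) := by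
              refine hslope.congr fun h => ?_
              simp only [Function.comp_apply, slope_def_field, add_sub_cancel_left]
            rw [← hd] at hslope'
            exact hslope'.eventually (eventually_gt_nhds hc'd)
          filter_upwards [hev1, hev2, self_mem_nhdsWithin] with h h1 h2 h3
          have hh : 0 < h := h3
          have hy' : y (T + h) - y T < c' * h := by
            have := (div_lt_iff₀ hh).mp h1; linarith
          have hw' : c' * h < w (T + h) - w T := by
            have := (lt_div_iff₀ hh).mp h2; linarith
          linarith [heq.le, heq.ge]
      obtain ⟨u, hu0, hsub⟩ := mem_nhdsGT_iff_exists_Ioo_subset.mp hev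
      have hu0' : (0:ℝ) < u := hu0
      set δ : ℝ := min u (t₂ - T) with hδdef
      have hδ : 0 < δ := lt_min hu0' (by linarith)
      have hδ1 : δ ≤ u := min_le_left _ _
      have hδ2 : δ ≤ t₂ - T := min_le_right _ _
      clear_value δ
      have hT'A : T + δ / 2 ∈ A := by
        refine ⟨⟨by linarith, by linarith⟩, fun s hs => ?_⟩
        rcases le_or_gt s T with h | h
        · exact hTA s ⟨hs.1, h⟩
        · have hmem : s - T ∈ Ioo (0:ℝ) u := ⟨by linarith, by linarith [hs.2]⟩
          have hlt := hsub hmem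
          simp only [mem_setOf_eq] at hlt
          have heqs : T + (s - T) = s := by ring
          rw [heqs] at hlt
          exact le_of_lt hlt
      have hle : T + δ / 2 ≤ T := by
        have h5 := le_csSup hAbdd hT'A
        rwa [← hT] at h5
      linarith
    have hy2 : y t₂ ≤ w t₂ := hTA t₂ (by rw [hTt2]; exact ⟨le_of_lt ht₁₂, le_refl _⟩)
    have hE : 0 < Real.exp (-Ma * (t₂ - t₁)) := Real.exp_pos _
    have hk2 := hkey t₂
    rw [hC] at hk2
    nlinarith [mul_nonneg hε.le hE.le]
  exact le_of_forall_pos_le_add H
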